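/- For every rationally independent sequence α ∈ [0,1]^ℕ satisfying the infinite-dimensional Diophantine condition |α·k| ≥ ν₀ / ∏_{j∈ℕ} (1 + ⟨⟨j⟩⟩^{1+τ₀} |k_j|^{1+τ₀}) for all nonzero finitely supported integer vectors k, and every τ > τ₀ + 1, the set of real numbers ω satisfying |ω α·k − 2nπ| ≥ ν / ∏_{j∈ℕ} (1 + ⟨⟨j⟩⟩^{1+τ} |k_j|^{1+τ}) for some ν > 0 (for all nonzero finitely supported k and all n ∈ ℤ) has full Lebesgue measure in ℝ. -/

import Mathlib

open MeasureTheory Complex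

/-- `⟨⟨j⟩⟩ = max {|j|, 1}` -/
noncomputable def jwt (j : ℕ) : ℝ := max (j : ℝ) 1

/-- `|k|_s = ∑_j ⟨⟨j⟩⟩^s |k_j|` for a finitely supported integer vector `k`. -/
noncomputable def swt (s : ℝ) (k : ℕ →₀ ℤ) : ℝ :=
  ∑ j ∈ k.support, jwt j ^ s * |(k j : ℝ)|

/-- `‖k‖₁ = ∑_j |k_j|`. -/
noncomputable def twt1 (k : ℕ →₀ ℤ) : ℝ := ∑ j ∈ k.support, |(k j : ℝ)|

/-- `∏_j (1 + ⟨⟨j⟩⟩^{1+τ} |k_j|^{1+τ})` -/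
noncomputable def dprod (τ : ℝ) (k : ℕ →₀ ℤ) : ℝ :=
  ∏ j ∈ k.support, (1 + jwt j ^ (1 + τ) * |(k j : ℝ)| ^ (1 + τ))

/-- `α · k` -/
noncomputable def adot (α : ℕ → ℝ) (k : ℕ →₀ ℤ) : ℝ :=
  ∑ j ∈ k.support, α j * (k j : ℝ)

/-- `k · σ` for complex `σ`. -/
noncomputable def cdot (k : ℕ →₀ ℤ) (σ : ℕ → ℂ) : ℂ :=
  ∑ j ∈ k.support, (k j : ℂ) * σ j

/-- The weighted ℓ¹ Fourier norm `‖h‖_ρ = ∑_k |h_k| e^{ρ |k|_s}` (valued in `ℝ≥0∞`). -/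
noncomputable def anorm (ρ s : ℝ) (h : (ℕ →₀ ℤ) → ℂ) : ENNReal :=
  ∑' k : ℕ →₀ ℤ, (‖h k‖₊ : ENNReal) * ENNReal.ofReal (Real.exp (ρ * swt s k))

/-- Evaluation of a Fourier coefficient family at a (complexified) point of the torus. -/
noncomputable def aeval (h : (ℕ →₀ ℤ) → ℂ) (σ : ℕ → ℂ) : ℂ :=
  ∑' k : ℕ →₀ ℤ, h k * Complex.exp (Complex.I * cdot k σ)

/-- The thickened infinite-dimensional torus (imaginary parts of width `ρ ⟨⟨j⟩⟩^s`). -/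
def Strip (ρ s : ℝ) : Set (ℕ → ℂ) := {σ | ∀ j, |(σ j).im| ≤ ρ * jwt j ^ s}

/-- `F` is represented on the strip of width `ρ` by the Fourier coefficients `c`. -/
def HasCoeffsOn (ρ s : ℝ) (F : (ℕ → ℂ) → ℂ) (c : (ℕ →₀ ℤ) → ℂ) : Prop :=
  ∀ σ ∈ Strip ρ s, HasSum (fun k : ℕ →₀ ℤ => c k * Complex.exp (Complex.I * cdot k σ)) (F σ)


/-- if `α ∈ [0,1]^ℕ` is rationally independent and satisfies the
infinite-dimensional Diophantine condition with constants `ν₀, τ₀`, and `τ > τ₀ + 1`,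
then the set `𝒟(τ;α) = ∪_{ν>0} 𝒟(ν,τ;α)` of `ω` with
`|ω α·k − 2nπ| ≥ ν / ∏_j (1+⟨⟨j⟩⟩^{1+τ}|k_j|^{1+τ})` for all nonzero finitely supported `k`
and all `n ∈ ℤ`, has full Lebesgue measure in `ℝ`. -/


lemma sum_prod_le_prod_tsum (c : ℕ → ℤ → ℝ) (hc : ∀ j m, 0 ≤ c j m)
    (hs : ∀ j, Summable (c j)) (J : Finset ℕ) :
    ∀ F : Finset (ℕ →₀ ℤ), (∀ k ∈ F, (k.support : Set ℕ) ⊆ J) →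
      ∑ k ∈ F, ∏ j ∈ J, c j (k j) ≤ ∏ j ∈ J, ∑' m, c j m := by
  classical
  induction J using Finset.induction_on with
  | empty =>
    intro F hF
    simp only [Finset.prod_empty]
    have hsub : F ⊆ {0} := by
      intro k hk
      simp only [Finset.mem_singleton]
      ext j
      by_contra hj
      have : j ∈ k.support := Finsupp.mem_support_iff.2 (by simpa using hj)
      exact absurd (hF k hk this) (by simp)
    calc ∑ k ∈ F, (1:ℝ) ≤ ∑ k ∈ ({0} : Finset (ℕ →₀ ℤ)), (1:ℝ) :=
          Finset.sum_le_sum_of_subset_of_nonneg hsub (by intros; norm_num)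
      _ = 1 := by simp
  | @insert j₀ J' hj₀ ih =>
    intro F hF
    have hP' : (0:ℝ) ≤ ∏ j ∈ J', ∑' m, c j m :=
      Finset.prod_nonneg fun j _ => tsum_nonneg (hc j)
    rw [Finset.prod_insert hj₀]
    have key : ∀ m : ℤ, ∑ k ∈ F.filter (fun k => k j₀ = m), ∏ j ∈ insert j₀ J', c j (k j)
        ≤ c j₀ m * ∏ j ∈ J', ∑' m', c j m' := by
      intro m
      have h1 : ∀ k ∈ F.filter (fun k => k j₀ = m),
          ∏ j ∈ insert j₀ J', c j (k j) = c j₀ m * ∏ j ∈ J', c j ((k.erase j₀) j) := by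
        intro k hk
        rw [Finset.mem_filter] at hk
        rw [Finset.prod_insert hj₀, hk.2]
        congr 1
        refine Finset.prod_congr rfl fun j hj => ?_
        have hjne : j ≠ j₀ := fun h => hj₀ (h ▸ hj)
        rw [Finsupp.erase_ne hjne]
      rw [Finset.sum_congr rfl h1, ← Finset.mul_sum]
      have hinj : Set.InjOn (fun k : ℕ →₀ ℤ => k.erase j₀) (F.filter (fun k => k j₀ = m)) := by
        intro k hk k' hk' h
        rw [Finset.coe_filter, Set.mem_setOf_eq] at hk hk'
        ext j
        by_cases hj : j = j₀
        · rw [hj, hk.2, hk'.2]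
        · have := congrArg (fun f => f j) h
          simpa [Finsupp.erase_ne hj] using this
      have h2 : ∑ k ∈ F.filter (fun k => k j₀ = m), ∏ j ∈ J', c j ((k.erase j₀) j)
          = ∑ k' ∈ (F.filter (fun k => k j₀ = m)).image (fun k => k.erase j₀),
              ∏ j ∈ J', c j (k' j) := by
        rw [Finset.sum_image (fun x hx y hy h => hinj hx hy h)]
      rw [h2]
      refine mul_le_mul_of_nonneg_left ?_ (hc j₀ m)
      refine ih _ fun k' hk' => ?_
      rw [Finset.mem_image] at hk'
      obtain ⟨k, hk, rfl⟩ := hk'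
      intro j hj
      have hjm : (k.erase j₀) j ≠ 0 := Finsupp.mem_support_iff.1 hj
      have hjne : j ≠ j₀ := by
        intro h; subst h; exact hjm Finsupp.erase_same
      have hj' : j ∈ k.support := by
        rw [Finsupp.mem_support_iff]
        rwa [Finsupp.erase_ne hjne] at hjm
      have := hF k (Finset.mem_of_mem_filter k hk) hj'
      simpa [hjne] using this
    -- now group F by fibers of k j₀
    have hgroup : ∑ k ∈ F, ∏ j ∈ insert j₀ J', c j (k j)
        = ∑ m ∈ F.image (fun k => k j₀), ∑ k ∈ F.filter (fun k => k j₀ = m),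
            ∏ j ∈ insert j₀ J', c j (k j) := by
      rw [Finset.sum_fiberwise_of_maps_to (fun k hk => Finset.mem_image_of_mem _ hk)]
    rw [hgroup]
    calc ∑ m ∈ F.image (fun k => k j₀), ∑ k ∈ F.filter (fun k => k j₀ = m),
            ∏ j ∈ insert j₀ J', c j (k j)
        ≤ ∑ m ∈ F.image (fun k => k j₀), c j₀ m * ∏ j ∈ J', ∑' m', c j m' :=
          Finset.sum_le_sum fun m _ => key m
      _ = (∑ m ∈ F.image (fun k => k j₀), c j₀ m) * ∏ j ∈ J', ∑' m', c j m' := by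
          rw [Finset.sum_mul]
      _ ≤ (∑' m, c j₀ m) * ∏ j ∈ J', ∑' m', c j m' :=
          mul_le_mul_of_nonneg_right ((hs j₀).sum_le_tsum _ (fun m _ => hc j₀ m)) hP'

lemma one_le_jwt (j : ℕ) : 1 ≤ jwt j := le_max_right _ _
lemma jwt_pos (j : ℕ) : 0 < jwt j := lt_of_lt_of_le one_pos (one_le_jwt j)

noncomputable def cf (δ : ℝ) (j : ℕ) (m : ℤ) : ℝ :=
  if m = 0 then 1 else 2 * jwt j ^ (-δ) * |(m:ℝ)| ^ (-δ)

lemma cf_nonneg (δ : ℝ) (j : ℕ) (m : ℤ) : 0 ≤ cf δ j m := by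
  unfold cf
  split
  · norm_num
  · have := jwt_pos j
    positivity

lemma cf_eq (δ : ℝ) (hδ : 0 < δ) (j : ℕ) (m : ℤ) :
    cf δ j m = 2 * jwt j ^ (-δ) * |(m:ℝ)| ^ (-δ) + (if m = 0 then 1 else 0) := by
  unfold cf
  by_cases hm : m = 0
  · simp [hm, Real.zero_rpow (by linarith : -δ ≠ 0)]
  · simp [hm]

lemma summable_cf (δ : ℝ) (hδ : 1 < δ) (j : ℕ) : Summable (cf δ j) := by
  have h1 : Summable (fun m : ℤ => 2 * jwt j ^ (-δ) * |(m:ℝ)| ^ (-δ)) :=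
    (Real.summable_abs_int_rpow hδ).mul_left _
  have h2 : Summable (fun m : ℤ => if m = 0 then (1:ℝ) else 0) :=
    summable_of_ne_finset_zero (s := {0}) (by intro b hb; simp at hb; simp [hb])
  exact (h1.add h2).congr (fun m => (cf_eq δ (by linarith) j m).symm)

lemma tsum_cf (δ : ℝ) (hδ : 1 < δ) (j : ℕ) :
    ∑' m, cf δ j m = 1 + 2 * jwt j ^ (-δ) * ∑' m : ℤ, |(m:ℝ)| ^ (-δ) := by
  have h1 : Summable (fun m : ℤ => 2 * jwt j ^ (-δ) * |(m:ℝ)| ^ (-δ)) :=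
    (Real.summable_abs_int_rpow hδ).mul_left _
  have h2 : Summable (fun m : ℤ => if m = 0 then (1:ℝ) else 0) :=
    summable_of_ne_finset_zero (s := {0}) (by intro b hb; simp at hb; simp [hb])
  rw [tsum_congr (cf_eq δ (by linarith) j), h1.tsum_add h2, tsum_mul_left, tsum_ite_eq]
  ring

lemma summable_jwt_rpow (δ : ℝ) (hδ : 1 < δ) : Summable (fun j : ℕ => jwt j ^ (-δ)) := by
  have h1 : Summable (fun j : ℕ => (j:ℝ) ^ (-δ)) := Real.summable_nat_rpow.2 (by linarith)
  have h2 : Summable (fun j : ℕ => if j = 0 then (1:ℝ) else 0) :=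
    summable_of_ne_finset_zero (s := {0}) (by intro b hb; simp at hb; simp [hb])
  refine Summable.of_nonneg_of_le (fun j => by have := jwt_pos j; positivity) (fun j => ?_) (h1.add h2)
  by_cases hj : j = 0
  · subst hj
    simp [jwt, Real.zero_rpow (by linarith : -δ ≠ 0)]
  · have : jwt j = (j:ℝ) := by
      have : (1:ℝ) ≤ (j:ℝ) := by exact_mod_cast Nat.one_le_iff_ne_zero.2 hj
      simp [jwt, max_eq_left this]
    rw [this]; simp [hj]

noncomputable def qf (δ : ℝ) (k : ℕ →₀ ℤ) : ℝ := ∏ j ∈ k.support, cf δ j (k j)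

lemma qf_nonneg (δ : ℝ) (k : ℕ →₀ ℤ) : 0 ≤ qf δ k :=
  Finset.prod_nonneg fun j _ => cf_nonneg δ j (k j)

lemma qf_eq_prod (δ : ℝ) (k : ℕ →₀ ℤ) (J : Finset ℕ) (hJ : k.support ⊆ J) :
    qf δ k = ∏ j ∈ J, cf δ j (k j) := by
  refine Finset.prod_subset hJ fun j _ hj => ?_
  have : k j = 0 := Finsupp.notMem_support_iff.1 hj
  simp [cf, this]

lemma summable_qf (δ : ℝ) (hδ : 1 < δ) : Summable (qf δ) := by
  classical
  set T := ∑' m : ℤ, |(m:ℝ)| ^ (-δ) with hTdef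
  have hT : 0 ≤ T := tsum_nonneg fun m => by positivity
  have hsumt : Summable (fun j : ℕ => 2 * jwt j ^ (-δ) * T) := by
    have := (summable_jwt_rpow δ hδ).mul_left 2
    exact this.mul_right T
  set Ttot := ∑' j : ℕ, 2 * jwt j ^ (-δ) * T with hTtot
  refine summable_of_sum_le (fun k => qf_nonneg δ k) (fun u => ?_) (c := Real.exp Ttot)
  set J := u.sup Finsupp.support with hJ
  have h1 : ∑ k ∈ u, qf δ k = ∑ k ∈ u, ∏ j ∈ J, cf δ j (k j) :=
    Finset.sum_congr rfl fun k hk => qf_eq_prod δ k J (Finset.le_sup hk)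
  rw [h1]
  calc ∑ k ∈ u, ∏ j ∈ J, cf δ j (k j)
      ≤ ∏ j ∈ J, ∑' m, cf δ j m := by
        refine sum_prod_le_prod_tsum (cf δ) (cf_nonneg δ) (summable_cf δ hδ) J u
          fun k hk => ?_
        exact_mod_cast Finset.coe_subset.2 (Finset.le_sup hk)
    _ = ∏ j ∈ J, (1 + 2 * jwt j ^ (-δ) * T) := Finset.prod_congr rfl fun j _ => tsum_cf δ hδ j
    _ ≤ ∏ j ∈ J, Real.exp (2 * jwt j ^ (-δ) * T) := by
        refine Finset.prod_le_prod (fun j _ => ?_) (fun j _ => ?_)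
        · have := jwt_pos j; positivity
        · rw [add_comm]
          exact Real.add_one_le_exp _
    _ = Real.exp (∑ j ∈ J, 2 * jwt j ^ (-δ) * T) := by rw [Real.exp_sum]
    _ ≤ Real.exp Ttot := by
        refine Real.exp_le_exp.2 (hsumt.sum_le_tsum J (fun j _ => ?_))
        have := jwt_pos j; positivity

lemma one_le_prod_real (s : Finset ℕ) (f : ℕ → ℝ) (h : ∀ i ∈ s, 1 ≤ f i) :
    1 ≤ ∏ i ∈ s, f i := by
  have := Finset.prod_le_prod (f := fun _ : ℕ => (1:ℝ)) (g := f)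
    (fun i _ => zero_le_one) h
  simpa using this

lemma one_le_dprod (τ : ℝ) (k : ℕ →₀ ℤ) : 1 ≤ dprod τ k := by
  unfold dprod
  refine one_le_prod_real _ _ fun j _ => ?_
  have := jwt_pos j
  nlinarith [Real.rpow_nonneg (le_of_lt (jwt_pos j)) (1+τ), Real.rpow_nonneg (abs_nonneg ((k j : ℝ))) (1+τ),
    mul_nonneg (Real.rpow_nonneg (le_of_lt (jwt_pos j)) (1+τ)) (Real.rpow_nonneg (abs_nonneg ((k j : ℝ))) (1+τ))]

lemma dprod_pos (τ : ℝ) (k : ℕ →₀ ℤ) : 0 < dprod τ k := lt_of_lt_of_le one_pos (one_le_dprod τ k)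

lemma ratio_le_qf (τ₀ τ : ℝ) (hτ₀ : 0 < τ₀) (hτ : τ₀ + 1 < τ) (k : ℕ →₀ ℤ) :
    dprod τ₀ k / dprod τ k ≤ qf (τ - τ₀) k := by
  set δ := τ - τ₀ with hδdef
  rw [div_le_iff₀ (dprod_pos τ k)]
  unfold dprod qf
  rw [← Finset.prod_mul_distrib]
  refine Finset.prod_le_prod (fun j _ => ?_) (fun j hj => ?_)
  · have := jwt_pos j
    have := Real.rpow_nonneg (le_of_lt (jwt_pos j)) (1+τ₀)
    have := Real.rpow_nonneg (abs_nonneg ((k j : ℝ))) (1+τ₀)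
    positivity
  · -- 1 + jwt^{1+τ₀}|kj|^{1+τ₀} ≤ cf δ j (k j) * (1 + jwt^{1+τ}|kj|^{1+τ})
    have hkj : k j ≠ 0 := Finsupp.mem_support_iff.1 hj
    have hkj1 : (1:ℝ) ≤ |(k j : ℝ)| := by
      rw [← Int.cast_abs]
      exact_mod_cast Int.one_le_abs (by simpa using hkj)
    set x := jwt j * |(k j : ℝ)| with hx
    have hx1 : 1 ≤ x := one_le_mul_of_one_le_of_one_le (one_le_jwt j) hkj1
    have hx0 : 0 < x := lt_of_lt_of_le one_pos hx1
    have hcf : cf δ j (k j) = 2 * x ^ (-δ) := by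
      rw [cf, if_neg hkj, hx, Real.mul_rpow (le_of_lt (jwt_pos j)) (abs_nonneg _)]
      ring
    have hprod : ∀ s : ℝ, jwt j ^ s * |(k j : ℝ)| ^ s = x ^ s := fun s =>
      (Real.mul_rpow (le_of_lt (jwt_pos j)) (abs_nonneg _)).symm
    rw [hcf, hprod, hprod]
    have key : x ^ (-δ) * x ^ (1+τ) = x ^ (1+τ₀) := by
      rw [← Real.rpow_add hx0]
      congr 1
      simp [hδdef]; ring
    have h1 : 1 ≤ x ^ (1+τ₀) := Real.one_le_rpow hx1 (by linarith)
    have h2 : 0 ≤ x ^ (-δ) := Real.rpow_nonneg (le_of_lt hx0) _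
    nlinarith [key]

lemma summable_ratio (τ₀ τ : ℝ) (hτ₀ : 0 < τ₀) (hτ : τ₀ + 1 < τ) :
    Summable (fun k : ℕ →₀ ℤ => dprod τ₀ k / dprod τ k) := by
  refine Summable.of_nonneg_of_le (fun k => ?_) (fun k => ratio_le_qf τ₀ τ hτ₀ hτ k)
    (summable_qf (τ - τ₀) (by linarith))
  exact div_nonneg (le_of_lt (dprod_pos τ₀ k)) (le_of_lt (dprod_pos τ k))

lemma key_k (a ν ε M D₀ ν₀ : ℝ) (ha : a ≠ 0) (hν₀ : 0 < ν₀) (hD₀ : 1 ≤ D₀)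
    (hdio : ν₀ / D₀ ≤ |a|) (hε : 0 < ε) (hε1 : ε ≤ 1) (hM : 0 ≤ M)
    (hεν : ε ≤ ν) (hεD : ε * D₀ ≤ ν) :
    ∑' n : ℤ, volume ({ω : ℝ | |ω * a - 2 * (n:ℝ) * Real.pi| < ε} ∩ Set.Icc (-M) M)
      ≤ ENNReal.ofReal ((2 * M + 4 / ν₀) * ν) := by
  have haabs : 0 < |a| := abs_pos.2 ha
  have hπ : (3:ℝ) < Real.pi := Real.pi_gt_three
  set N : ℝ := (M * |a| + ε) / (2 * Real.pi) with hNdef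
  have hN0 : 0 ≤ N := by positivity
  set L : ℤ := ⌊N⌋ with hLdef
  have hL0 : 0 ≤ L := Int.floor_nonneg.2 hN0
  set s : Finset ℤ := Finset.Icc (-L) L with hsdef
  set A : ℤ → Set ℝ := fun n => {ω : ℝ | |ω * a - 2 * (n:ℝ) * Real.pi| < ε} with hAdef
  have hball : ∀ n : ℤ, A n = Metric.ball ((2 * (n:ℝ) * Real.pi) / a) (ε / |a|) := by
    intro n
    ext ω
    simp only [hAdef, Set.mem_setOf_eq, Metric.mem_ball, Real.dist_eq]
    rw [show ω * a - 2 * (n:ℝ) * Real.pi = (ω - 2 * (n:ℝ) * Real.pi / a) * a by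
      field_simp, abs_mul]
    exact (lt_div_iff₀ haabs).symm
  have hempty : ∀ n ∉ s, A n ∩ Set.Icc (-M) M = ∅ := by
    intro n hn
    rw [Set.eq_empty_iff_forall_notMem]
    rintro ω ⟨hω1, hω2⟩
    rw [Set.mem_Icc] at hω2
    have hωM : |ω| ≤ M := abs_le.2 hω2
    have hNn : N < |(n:ℝ)| := by
      rcases lt_or_ge N |(n:ℝ)| with h | h
      · exact h
      · exfalso
        apply hn
        rw [hsdef, Finset.mem_Icc]
        have : |(n:ℝ)| ≤ (L:ℝ) := by
          rw [← Int.cast_abs] at h ⊢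
          exact_mod_cast Int.le_floor.2 (by exact_mod_cast h)
        rw [← Int.cast_abs] at this
        have h2 : |n| ≤ L := by exact_mod_cast this
        exact ⟨neg_le_of_abs_le h2, le_of_abs_le h2⟩
    have h1 : |ω * a - 2 * (n:ℝ) * Real.pi| < ε := hω1
    have h2 : |2 * (n:ℝ) * Real.pi| ≤ |ω * a - 2 * (n:ℝ) * Real.pi| + |ω * a| := by
      have := abs_sub_abs_le_abs_sub (2 * (n:ℝ) * Real.pi) (ω * a)
      have := abs_sub_comm (ω * a) (2 * (n:ℝ) * Real.pi)
      calc |2 * (n:ℝ) * Real.pi| ≤ |2 * (n:ℝ) * Real.pi - ω * a| + |ω * a| := by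
            have := abs_add_le (2 * (n:ℝ) * Real.pi - ω * a) (ω * a)
            simpa using this
        _ = |ω * a - 2 * (n:ℝ) * Real.pi| + |ω * a| := by rw [abs_sub_comm]
    have h3 : |2 * (n:ℝ) * Real.pi| = 2 * Real.pi * |(n:ℝ)| := by
      rw [abs_mul, abs_mul]
      rw [abs_of_pos Real.pi_pos, abs_of_pos (by norm_num : (0:ℝ) < 2)]
      ring
    have h4 : |ω * a| ≤ M * |a| := by
      rw [abs_mul]
      exact mul_le_mul_of_nonneg_right hωM (abs_nonneg a)
    have h5 : 2 * Real.pi * N = M * |a| + ε := by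
      rw [hNdef]
      field_simp
    nlinarith [Real.pi_pos, hNn]
  have hvol : ∀ n, volume (A n) = ENNReal.ofReal (2 * (ε / |a|)) := by
    intro n
    rw [hball n, Real.volume_ball]
  have hbound : ∀ n : ℤ, volume (A n ∩ Set.Icc (-M) M)
      ≤ if n ∈ s then ENNReal.ofReal (2 * (ε / |a|)) else 0 := by
    intro n
    by_cases hn : n ∈ s
    · rw [if_pos hn, ← hvol n]
      exact measure_mono Set.inter_subset_left
    · rw [if_neg hn, hempty n hn]
      simp
  calc ∑' n : ℤ, volume (A n ∩ Set.Icc (-M) M)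
      ≤ ∑' n : ℤ, if n ∈ s then ENNReal.ofReal (2 * (ε / |a|)) else 0 :=
        ENNReal.tsum_le_tsum hbound
    _ = ∑ n ∈ s, ENNReal.ofReal (2 * (ε / |a|)) := by
        rw [tsum_eq_sum (s := s) (fun n hn => if_neg hn)]
        exact Finset.sum_congr rfl fun n hn => if_pos hn
    _ = (s.card : ENNReal) * ENNReal.ofReal (2 * (ε / |a|)) := by
        rw [Finset.sum_const, nsmul_eq_mul]
    _ = ENNReal.ofReal ((s.card : ℝ) * (2 * (ε / |a|))) := by
        rw [← ENNReal.ofReal_natCast s.card, ← ENNReal.ofReal_mul (Nat.cast_nonneg _)]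
    _ ≤ ENNReal.ofReal ((2 * M + 4 / ν₀) * ν) := by
        refine ENNReal.ofReal_le_ofReal ?_
        have hcard : (s.card : ℝ) ≤ 2 * N + 1 := by
          rw [hsdef, Int.card_Icc]
          have h0 : ((L + 1 - -L).toNat : ℤ) = 2 * L + 1 := by omega
          have h1 : ((L + 1 - -L).toNat : ℝ) = ((2 * L + 1 : ℤ) : ℝ) := by
            exact_mod_cast congrArg (fun z : ℤ => (z : ℝ)) h0
          rw [h1]
          have : (L : ℝ) ≤ N := Int.floor_le N
          push_cast
          linarith
        have hNle : 2 * N + 1 ≤ M * |a| + 2 := by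
          have h5 : 2 * N = (M * |a| + ε) / Real.pi := by
            rw [hNdef]; field_simp
          have h6 : (M * |a| + ε) / Real.pi ≤ M * |a| + ε :=
            div_le_self (by positivity) (by linarith)
          linarith
        have hstep : (s.card : ℝ) * (2 * (ε / |a|)) ≤ (M * |a| + 2) * (2 * (ε / |a|)) := by
          refine mul_le_mul_of_nonneg_right (le_trans hcard hNle) (by positivity)
        refine hstep.trans ?_
        have hexp : (M * |a| + 2) * (2 * (ε / |a|)) = 2 * M * ε + 4 * (ε / |a|) := by
          field_simp
          ring
        rw [hexp]
        have hinv : 1 / |a| ≤ D₀ / ν₀ := by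
          rw [div_le_div_iff₀ haabs hν₀]
          calc 1 * ν₀ = ν₀ := one_mul _
            _ = (ν₀ / D₀) * D₀ := by field_simp
            _ ≤ |a| * D₀ := mul_le_mul_of_nonneg_right hdio (by linarith)
            _ = D₀ * |a| := mul_comm _ _
        have h7 : ε / |a| ≤ ν / ν₀ := by
          calc ε / |a| = ε * (1 / |a|) := by ring
            _ ≤ ε * (D₀ / ν₀) := mul_le_mul_of_nonneg_left hinv (le_of_lt hε)
            _ = (ε * D₀) / ν₀ := by ring
            _ ≤ ν / ν₀ := by gcongr
        have hring : (2 * M + 4 / ν₀) * ν = 2 * M * ν + 4 * (ν / ν₀) := by ring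
        rw [hring]
        linarith [mul_le_mul_of_nonneg_left hεν (by linarith : (0:ℝ) ≤ 2 * M)]


theorem stmt0 (α : ℕ → ℝ) (hα : ∀ j, α j ∈ Set.Icc (0 : ℝ) 1)
    (hindep : ∀ k : ℕ →₀ ℤ, k ≠ 0 → adot α k ≠ 0)
    (ν₀ τ₀ : ℝ) (hν₀ : 0 < ν₀) (hτ₀ : 0 < τ₀)
    (hdio : ∀ k : ℕ →₀ ℤ, k ≠ 0 → ν₀ / dprod τ₀ k ≤ |adot α k|)
    (τ : ℝ) (hτ : τ₀ + 1 < τ) :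
    MeasureTheory.volume
      ({ω : ℝ | ∃ ν > (0 : ℝ), ∀ k : ℕ →₀ ℤ, k ≠ 0 → ∀ n : ℤ,
          ν / dprod τ k ≤ |ω * adot α k - 2 * (n : ℝ) * Real.pi|}ᶜ) = 0 := by
  classical
  have hSr : Summable (fun k : ℕ →₀ ℤ => dprod τ₀ k / dprod τ k) :=
    summable_ratio τ₀ τ hτ₀ hτ
  set r : (ℕ →₀ ℤ) → ℝ := fun k => dprod τ₀ k / dprod τ k with hrdef
  have hr0 : ∀ k, 0 ≤ r k := fun k =>
    div_nonneg (dprod_pos τ₀ k).le (dprod_pos τ k).le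
  set S : ℝ := ∑' k, r k with hSdef
  have hS0 : 0 ≤ S := tsum_nonneg hr0
  -- the bad set is contained in the union over M of its bounded pieces
  set Sc : Set ℝ := {ω : ℝ | ∃ ν > (0 : ℝ), ∀ k : ℕ →₀ ℤ, k ≠ 0 → ∀ n : ℤ,
          ν / dprod τ k ≤ |ω * adot α k - 2 * (n : ℝ) * Real.pi|}ᶜ with hScdef
  have hcoverM : Sc ⊆ ⋃ M : ℕ, (Sc ∩ Set.Icc (-(M:ℝ)) (M:ℝ)) := by
    intro ω hω
    refine Set.mem_iUnion.2 ⟨⌈|ω|⌉₊, hω, ?_⟩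
    have h1 : |ω| ≤ (⌈|ω|⌉₊ : ℝ) := Nat.le_ceil _
    exact ⟨neg_le_of_abs_le h1, le_of_abs_le h1⟩
  refine measure_mono_null hcoverM (measure_iUnion_null fun M => ?_)
  set C : ℝ := 2 * (M:ℝ) + 4 / ν₀ with hCdef
  have hC0 : 0 ≤ C := by positivity
  have hM0 : (0:ℝ) ≤ (M:ℝ) := Nat.cast_nonneg M
  -- main estimate for each small ν
  have main : ∀ ν : ℝ, 0 < ν → ν ≤ 1 →
      volume (Sc ∩ Set.Icc (-(M:ℝ)) (M:ℝ)) ≤ ENNReal.ofReal (C * ν * S) := by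
    intro ν hν hν1
    have hcover : Sc ∩ Set.Icc (-(M:ℝ)) (M:ℝ) ⊆
        ⋃ k : ℕ →₀ ℤ, ⋃ n : ℤ,
          ({ω : ℝ | k ≠ 0 ∧ |ω * adot α k - 2 * (n:ℝ) * Real.pi| < ν / dprod τ k}
            ∩ Set.Icc (-(M:ℝ)) (M:ℝ)) := by
      rintro ω ⟨hωS, hωI⟩
      rw [hScdef, Set.mem_compl_iff, Set.mem_setOf_eq] at hωS
      push_neg at hωS
      obtain ⟨k, hk, n, hn⟩ := hωS ν hν
      exact Set.mem_iUnion.2 ⟨k, Set.mem_iUnion.2 ⟨n, ⟨hk, hn⟩, hωI⟩⟩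
    refine (measure_mono hcover).trans ((measure_iUnion_le _).trans ?_)
    have hklevel : ∀ k : ℕ →₀ ℤ,
        volume (⋃ n : ℤ,
          ({ω : ℝ | k ≠ 0 ∧ |ω * adot α k - 2 * (n:ℝ) * Real.pi| < ν / dprod τ k}
            ∩ Set.Icc (-(M:ℝ)) (M:ℝ))) ≤ ENNReal.ofReal (C * ν * r k) := by
      intro k
      by_cases hk : k = 0
      · have : ∀ n : ℤ,
            ({ω : ℝ | k ≠ 0 ∧ |ω * adot α k - 2 * (n:ℝ) * Real.pi| < ν / dprod τ k}
              ∩ Set.Icc (-(M:ℝ)) (M:ℝ)) = ∅ := by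
          intro n
          rw [Set.eq_empty_iff_forall_notMem]
          rintro ω ⟨⟨hk', _⟩, _⟩
          exact hk' hk
        simp only [this, Set.iUnion_empty]
        simp
      · refine (measure_iUnion_le _).trans ?_
        have hseteq : ∀ n : ℤ,
            ({ω : ℝ | k ≠ 0 ∧ |ω * adot α k - 2 * (n:ℝ) * Real.pi| < ν / dprod τ k}
              ∩ Set.Icc (-(M:ℝ)) (M:ℝ))
            = ({ω : ℝ | |ω * adot α k - 2 * (n:ℝ) * Real.pi| < ν / dprod τ k}
              ∩ Set.Icc (-(M:ℝ)) (M:ℝ)) := by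
          intro n
          congr 1
          ext ω
          simp [hk]
        have hD := dprod_pos τ k
        have hD1 := one_le_dprod τ k
        have hD₀1 := one_le_dprod τ₀ k
        have hbound := key_k (adot α k) (ν * r k) (ν / dprod τ k) (M:ℝ) (dprod τ₀ k) ν₀
          (hindep k hk) hν₀ hD₀1 (hdio k hk)
          (div_pos hν hD)
          ((div_le_one hD).2 (hν1.trans hD1))
          hM0
          (by
            have h1 : ν * 1 ≤ ν * dprod τ₀ k :=
              mul_le_mul_of_nonneg_left hD₀1 hν.le
            rw [hrdef]
            calc ν / dprod τ k = ν * 1 / dprod τ k := by ring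
              _ ≤ ν * dprod τ₀ k / dprod τ k := by gcongr
              _ = ν * (dprod τ₀ k / dprod τ k) := by ring)
          (by
            rw [hrdef]
            have : ν / dprod τ k * dprod τ₀ k = ν * (dprod τ₀ k / dprod τ k) := by
              field_simp
            rw [this])
        calc ∑' n : ℤ, volume
              ({ω : ℝ | k ≠ 0 ∧ |ω * adot α k - 2 * (n:ℝ) * Real.pi| < ν / dprod τ k}
                ∩ Set.Icc (-(M:ℝ)) (M:ℝ))
            = ∑' n : ℤ, volume
              ({ω : ℝ | |ω * adot α k - 2 * (n:ℝ) * Real.pi| < ν / dprod τ k}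
                ∩ Set.Icc (-(M:ℝ)) (M:ℝ)) := by
              exact tsum_congr fun n => by rw [hseteq n]
          _ ≤ ENNReal.ofReal ((2 * (M:ℝ) + 4 / ν₀) * (ν * r k)) := hbound
          _ = ENNReal.ofReal (C * ν * r k) := by rw [hCdef]; ring_nf
    refine (ENNReal.tsum_le_tsum hklevel).trans ?_
    have hsummable : Summable (fun k : ℕ →₀ ℤ => C * ν * r k) := hSr.mul_left (C * ν)
    rw [← ENNReal.ofReal_tsum_of_nonneg (fun k => by
      have := hr0 k; positivity) hsummable]
    refine ENNReal.ofReal_le_ofReal ?_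
    rw [hSdef, ← tsum_mul_left]
  -- conclude by letting ν → 0
  refine le_antisymm ?_ (by simp)
  have htend : Filter.Tendsto (fun m : ℕ => ENNReal.ofReal (C * (1/((m:ℝ)+1)) * S))
      Filter.atTop (nhds 0) := by
    have h1 : Filter.Tendsto (fun m : ℕ => C * (1/((m:ℝ)+1)) * S)
        Filter.atTop (nhds 0) := by
      have h2 := tendsto_one_div_add_atTop_nhds_zero_nat (𝕜 := ℝ)
      have h3 := (h2.const_mul C).mul_const S
      simpa using h3
    have := ENNReal.tendsto_ofReal h1
    simpa using this
  refine ge_of_tendsto' htend fun m => ?_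
  exact main (1/((m:ℝ)+1)) (by positivity)
    (by rw [div_le_one (by positivity)]; linarith [Nat.cast_nonneg (α := ℝ) m])
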